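/- Let f(t) = csc²(t/2) = 1/sin²(t/2). Then for every k ≥ 0 and t ∈ (0, π), (-1)^k f^{(k)}(t) > 0. Consequently, for every even positive integer m, the function g_m(t) = (1/4) f^{(m-2)}(t) (for m ≥ 2), extended evenly and 2π-periodically, is positive, strictly decreasing, and strictly convex on (0, π). -/

import Mathlib

open Real
open Polynomial


noncomputable def cscP : ℕ → Polynomial ℝ
  | 0 => 1 + Polynomial.X ^ 2
  | (k+1) => Polynomial.C (1/2) * ((1 + Polynomial.X ^ 2) * Polynomial.derivative (cscP k))

lemma cscP_coeff_nonneg (k : ℕ) : ∀ n, 0 ≤ (cscP k).coeff n := by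
  induction k with
  | zero =>
    intro n
    simp only [cscP, coeff_add, Polynomial.coeff_one, coeff_X_pow]
    split_ifs <;> norm_num
  | succ k ih =>
    intro n
    have hq : ∀ n, 0 ≤ (Polynomial.derivative (cscP k)).coeff n := by
      intro n
      rw [Polynomial.coeff_derivative]
      exact mul_nonneg (ih _) (by positivity)
    have h1 : ∀ n, 0 ≤ ((1 + Polynomial.X ^ 2 : Polynomial ℝ)).coeff n := by
      intro n
      simp only [coeff_add, Polynomial.coeff_one, coeff_X_pow]
      split_ifs <;> norm_num
    rw [cscP, coeff_C_mul, Polynomial.coeff_mul]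
    have := Finset.sum_nonneg (fun x (_ : x ∈ Finset.HasAntidiagonal.antidiagonal n) =>
      mul_nonneg (h1 x.1) (hq x.2))
    positivity

lemma cscP_coeff_pos (k : ℕ) : 0 < (cscP k).coeff (k + 2) := by
  induction k with
  | zero =>
    simp [cscP, coeff_add, Polynomial.coeff_one, coeff_X_pow]
  | succ k ih =>
    have hq : ∀ n, 0 ≤ (Polynomial.derivative (cscP k)).coeff n := by
      intro n
      rw [Polynomial.coeff_derivative]
      exact mul_nonneg (cscP_coeff_nonneg k _) (by positivity)
    have hsplit : (1 + Polynomial.X ^ 2 : Polynomial ℝ) * Polynomial.derivative (cscP k)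
        = Polynomial.derivative (cscP k) + Polynomial.X ^ 2 * Polynomial.derivative (cscP k) := by
      ring
    have hX : ((Polynomial.X ^ 2 : Polynomial ℝ) * Polynomial.derivative (cscP k)).coeff (k + 1 + 2)
        = (Polynomial.derivative (cscP k)).coeff (k + 1) := Polynomial.coeff_X_pow_mul _ _ _
    have hd : 0 < (Polynomial.derivative (cscP k)).coeff (k + 1) := by
      rw [Polynomial.coeff_derivative]
      exact mul_pos ih (by positivity)
    rw [cscP, coeff_C_mul, hsplit, coeff_add]
    have : (k + 1 + 2) = (k + 3) := by omega
    rw [this] at hX ⊢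
    rw [hX]
    have := hq (k + 3)
    nlinarith

lemma eval_pos_of_coeff (p : Polynomial ℝ) (h0 : ∀ n, 0 ≤ p.coeff n) (m : ℕ)
    (hm : 0 < p.coeff m) {x : ℝ} (hx : 0 < x) : 0 < p.eval x := by
  rw [Polynomial.eval_eq_sum_range]
  refine Finset.sum_pos' (fun i _ => mul_nonneg (h0 i) (pow_nonneg hx.le i)) ⟨m, ?_, ?_⟩
  · exact Finset.mem_range.2 (Nat.lt_succ_of_le (Polynomial.le_natDegree_of_ne_zero hm.ne'))
  · exact mul_pos hm (pow_pos hx m)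

lemma cscP_eval_pos (k : ℕ) {x : ℝ} (hx : 0 < x) : 0 < (cscP k).eval x :=
  eval_pos_of_coeff _ (cscP_coeff_nonneg k) (k + 2) (cscP_coeff_pos k) hx

lemma one_add_cot_sq {x : ℝ} (hs : Real.sin x ≠ 0) :
    1 + Real.cot x ^ 2 = (Real.sin x ^ 2)⁻¹ := by
  rw [Real.cot_eq_cos_div_sin]
  field_simp
  linarith [Real.sin_sq_add_cos_sq x]

lemma hasDerivAt_cot_half {t : ℝ} (hs : Real.sin (t / 2) ≠ 0) :
    HasDerivAt (fun s => Real.cot (s / 2)) (-(1/2) * (Real.sin (t / 2) ^ 2)⁻¹) t := by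
  have h1 : HasDerivAt (fun x : ℝ => Real.cos x / Real.sin x)
      ((-Real.sin (t/2) * Real.sin (t/2) - Real.cos (t/2) * Real.cos (t/2)) / Real.sin (t/2) ^ 2)
      (t / 2) := (Real.hasDerivAt_cos _).div (Real.hasDerivAt_sin _) hs
  have h2 : HasDerivAt (fun s : ℝ => s / 2) (1 / 2 : ℝ) t := by
    simpa using (hasDerivAt_id t).div_const 2
  have h3 := h1.comp t h2
  have he : (fun s : ℝ => Real.cos (s / 2) / Real.sin (s / 2)) = fun s => Real.cot (s / 2) := by
    funext s
    rw [Real.cot_eq_cos_div_sin]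
  rw [show (fun x : ℝ => Real.cos x / Real.sin x) ∘ (fun s : ℝ => s / 2)
      = fun s : ℝ => Real.cos (s / 2) / Real.sin (s / 2) from rfl, he] at h3
  refine h3.congr_deriv ?_
  have hsq : Real.sin (t/2) ^ 2 ≠ 0 := pow_ne_zero _ hs
  have := Real.sin_sq_add_cos_sq (t / 2)
  field_simp
  nlinarith [Real.sin_sq_add_cos_sq (t / 2)]

lemma hasDerivAt_G (k : ℕ) {t : ℝ} (hs : Real.sin (t / 2) ≠ 0) :
    HasDerivAt (fun s => (-1:ℝ) ^ k * (cscP k).eval (Real.cot (s / 2)))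
      ((-1:ℝ) ^ (k + 1) * (cscP (k + 1)).eval (Real.cot (t / 2))) t := by
  have hc := ((cscP k).hasDerivAt (Real.cot (t / 2))).comp t (hasDerivAt_cot_half hs)
  have h := hc.const_mul ((-1:ℝ) ^ k)
  refine h.congr_deriv ?_
  have heval : (cscP (k + 1)).eval (Real.cot (t / 2))
      = (1/2) * ((1 + Real.cot (t / 2) ^ 2) *
        (Polynomial.derivative (cscP k)).eval (Real.cot (t / 2))) := by
    simp [cscP]
  rw [heval, one_add_cot_sq hs, pow_succ]
  ring

lemma sin_half_ne {t : ℝ} (ht : t ∈ Set.Ioo (0:ℝ) Real.pi) : Real.sin (t / 2) ≠ 0 := by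
  have := Real.pi_pos
  exact (Real.sin_pos_of_pos_of_lt_pi (by linarith [ht.1]) (by linarith [ht.2])).ne'

lemma cot_half_pos {t : ℝ} (ht : t ∈ Set.Ioo (0:ℝ) Real.pi) : 0 < Real.cot (t / 2) := by
  have hs : 0 < Real.sin (t / 2) := by
    have := Real.pi_pos
    exact Real.sin_pos_of_pos_of_lt_pi (by linarith [ht.1]) (by linarith [ht.2])
  have hc : 0 < Real.cos (t / 2) := by
    apply Real.cos_pos_of_mem_Ioo
    constructor
    · have := Real.pi_pos
      have : -(Real.pi / 2) < 0 := by linarith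
      linarith [ht.1]
    · linarith [ht.2]
  rw [Real.cot_eq_cos_div_sin]
  exact div_pos hc hs

lemma iteratedDeriv_csc_eq (f : ℝ → ℝ) (hf : f = fun t => (Real.sin (t / 2) ^ 2)⁻¹) (k : ℕ) :
    ∀ t ∈ Set.Ioo (0:ℝ) Real.pi,
      iteratedDeriv k f t = (-1:ℝ) ^ k * (cscP k).eval (Real.cot (t / 2)) := by
  induction k with
  | zero =>
    intro t ht
    rw [iteratedDeriv_zero, hf]
    have : (cscP 0).eval (Real.cot (t / 2)) = 1 + Real.cot (t / 2) ^ 2 := by simp [cscP]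
    rw [this, one_add_cot_sq (sin_half_ne ht)]
    ring
  | succ k ih =>
    intro t ht
    have hev : iteratedDeriv k f =ᶠ[nhds t]
        (fun s => (-1:ℝ) ^ k * (cscP k).eval (Real.cot (s / 2))) :=
      Filter.eventuallyEq_of_mem (isOpen_Ioo.mem_nhds ht) ih
    rw [iteratedDeriv_succ, hev.deriv_eq]
    exact (hasDerivAt_G k (sin_half_ne ht)).deriv
/-- For `f(t) = csc²(t/2)`, `(-1)^k f^{(k)} > 0` on `(0, π)`; consequently for each even
`m ≥ 2`, the kernel `g_m = (1/4) f^{(m-2)}` is positive, strictly decreasing and strictly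
convex on `(0, π)`. -/
theorem csc_sq_derivs (f : ℝ → ℝ) (hf : f = fun t => (Real.sin (t / 2) ^ 2)⁻¹) :
    (∀ k : ℕ, ∀ t ∈ Set.Ioo (0 : ℝ) Real.pi, 0 < (-1 : ℝ) ^ k * iteratedDeriv k f t) ∧
    (∀ m : ℕ, Even m → 2 ≤ m →
      (∀ t ∈ Set.Ioo (0 : ℝ) Real.pi, 0 < (1 / 4 : ℝ) * iteratedDeriv (m - 2) f t) ∧
      StrictAntiOn (fun t => (1 / 4 : ℝ) * iteratedDeriv (m - 2) f t)
        (Set.Ioo (0 : ℝ) Real.pi) ∧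
      StrictConvexOn ℝ (Set.Ioo (0 : ℝ) Real.pi)
        (fun t => (1 / 4 : ℝ) * iteratedDeriv (m - 2) f t)) := by
  have key := iteratedDeriv_csc_eq f hf
  have sign : ∀ k : ℕ, ∀ t ∈ Set.Ioo (0 : ℝ) Real.pi,
      0 < (-1 : ℝ) ^ k * iteratedDeriv k f t := by
    intro k t ht
    rw [key k t ht, ← mul_assoc, ← pow_add]
    have : (-1 : ℝ) ^ (k + k) = 1 := Even.neg_one_pow ⟨k, rfl⟩
    rw [this, one_mul]
    exact cscP_eval_pos k (cot_half_pos ht)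
  refine ⟨sign, ?_⟩
  intro m hm h2m
  obtain ⟨j, rfl⟩ : ∃ j, m = j + 2 := ⟨m - 2, by omega⟩
  have hj : Even j := by rcases hm with ⟨r, hr⟩; exact ⟨r - 1, by omega⟩
  simp only [Nat.add_sub_cancel]
  set g := fun t => (1 / 4 : ℝ) * iteratedDeriv j f t with hg
  -- derivative of g on the interval
  have hderiv : ∀ t ∈ Set.Ioo (0 : ℝ) Real.pi, HasDerivAt g
      ((1 / 4 : ℝ) * ((-1:ℝ) ^ (j + 1) * (cscP (j + 1)).eval (Real.cot (t / 2)))) t := by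
    intro t ht
    have hev : g =ᶠ[nhds t]
        (fun s => (1 / 4 : ℝ) * ((-1:ℝ) ^ j * (cscP j).eval (Real.cot (s / 2)))) :=
      Filter.eventuallyEq_of_mem (isOpen_Ioo.mem_nhds ht)
        (fun s hs => by simp only [hg, key j s hs])
    exact (((hasDerivAt_G j (sin_half_ne ht)).const_mul (1 / 4 : ℝ)).congr_of_eventuallyEq hev)
  have hdg : ∀ t ∈ Set.Ioo (0 : ℝ) Real.pi, deriv g t
      = (1 / 4 : ℝ) * ((-1:ℝ) ^ (j + 1) * (cscP (j + 1)).eval (Real.cot (t / 2))) :=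
    fun t ht => (hderiv t ht).deriv
  have hdneg : ∀ t ∈ Set.Ioo (0 : ℝ) Real.pi, deriv g t < 0 := by
    intro t ht
    rw [hdg t ht]
    have h1 : (-1 : ℝ) ^ (j + 1) = -1 := Odd.neg_one_pow (by exact hj.add_one)
    rw [h1]
    have := cscP_eval_pos (j + 1) (cot_half_pos ht)
    nlinarith
  have hcont : ContinuousOn g (Set.Ioo (0 : ℝ) Real.pi) :=
    fun t ht => ((hderiv t ht).continuousAt).continuousWithinAt
  have hd2 : ∀ t ∈ Set.Ioo (0 : ℝ) Real.pi, deriv (deriv g) t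
      = (1 / 4 : ℝ) * ((-1:ℝ) ^ (j + 2) * (cscP (j + 2)).eval (Real.cot (t / 2))) := by
    intro t ht
    have hev : deriv g =ᶠ[nhds t]
        (fun s => (1 / 4 : ℝ) * ((-1:ℝ) ^ (j + 1) * (cscP (j + 1)).eval (Real.cot (s / 2)))) :=
      Filter.eventuallyEq_of_mem (isOpen_Ioo.mem_nhds ht) hdg
    rw [hev.deriv_eq]
    exact ((hasDerivAt_G (j + 1) (sin_half_ne ht)).const_mul (1 / 4 : ℝ)).deriv
  refine ⟨?_, ?_, ?_⟩
  · intro t ht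
    have := sign j t ht
    have h1 : (-1 : ℝ) ^ j = 1 := Even.neg_one_pow hj
    rw [h1, one_mul] at this
    nlinarith
  · exact strictAntiOn_of_deriv_neg (convex_Ioo 0 Real.pi) hcont
      (fun x hx => hdneg x (by rwa [interior_Ioo] at hx))
  · apply strictConvexOn_of_deriv2_pos (convex_Ioo 0 Real.pi) hcont
    intro x hx
    rw [interior_Ioo] at hx
    have hit : (deriv^[2] g) x = deriv (deriv g) x := rfl
    rw [hit, hd2 x hx]
    have h1 : (-1 : ℝ) ^ (j + 2) = 1 := Even.neg_one_pow (by exact hj.add ⟨1, rfl⟩)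
    rw [h1, one_mul]
    have := cscP_eval_pos (j + 2) (cot_half_pos hx)
    linarith
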